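/- (Corner point of the full-duplex degree-of-freedom region, Lemma 2, second corner.) Define d1'' casewise: d1'' = min(2·L_{T1}·|Ψ_{T11}|, d_{R1}) if L_{R2}·|Ψ_{R22}| ≥ L_{T2}·|Ψ_{T22}|, and d1'' = min(2·L_{T1}·|Ψ_{T11}|, δ_{R1}) otherwise. Then d1'' = min(d1max, d_sum − d2max). In particular, if d_sum ≤ d1max + d2max then the degree-of-freedom pair (d1'', d2'') with d2'' = d2max equals the corner point (d_sum − d2max, d2max). -/
import Mathlib


open MeasureTheory Set

/-- Real-valued Lebesgue measure of a set of reals. -/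
noncomputable def μr (S : Set ℝ) : ℝ := (volume S).toReal

lemma μr_nonneg (S : Set ℝ) : 0 ≤ μr S := ENNReal.toReal_nonneg

lemma μr_split (s t : Set ℝ) (ht : MeasurableSet t) (hs : s ⊆ Icc (-1) 1) :
    μr s = μr (s \ t) + μr (s ∩ t) := by
  have hfin : volume s ≠ ⊤ := ne_top_of_le_ne_top (by simp) (measure_mono hs)
  have h1 : volume (s \ t) ≠ ⊤ := ne_top_of_le_ne_top hfin (measure_mono diff_subset)
  have h2 : volume (s ∩ t) ≠ ⊤ := ne_top_of_le_ne_top hfin (measure_mono inter_subset_left)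
  unfold μr
  rw [← measure_diff_add_inter s ht, ENNReal.toReal_add h1 h2]

lemma μr_inter_le (s t : Set ℝ) (ht : t ⊆ Icc (-1) 1) : μr (s ∩ t) ≤ μr t := by
  have hfin : volume t ≠ ⊤ := ne_top_of_le_ne_top (by simp) (measure_mono ht)
  exact ENNReal.toReal_mono hfin (measure_mono inter_subset_right)

set_option maxHeartbeats 4000000 in
lemma corner_key (t11 rs ri r12 ts tp ti r22 : ℝ)
    (h1 : 0 ≤ t11) (h2 : 0 ≤ rs) (h3 : 0 ≤ ri) (h4 : 0 ≤ r12)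
    (h5 : 0 ≤ ts) (h6 : 0 ≤ tp) (h7 : 0 ≤ ti) (h8 : 0 ≤ r22)
    (h9 : ri ≤ r12) :
    (if ts + ti ≤ r22
      then min (2 * t11) (2 * rs + 2 * max 0 (min ri (max (r12 - (tp + ti)) 0 + tp)))
      else min (2 * t11) (2 * rs + 2 * min ri
          (r12 - max (r22 - (ts + max (tp + ti - r12) 0)) 0)))
    = min (2 * min t11 (rs + ri))
        (2 * ts + 2 * rs + 2 * max (tp + ti) r12 - 2 * min (ts + ti) r22) := by
  simp only [min_def, max_def]
  split_ifs <;> linarith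

theorem corner_point_two
    (L_T1 L_R1 L_T2 L_R2 : ℝ)
    (hLT1 : 0 ≤ L_T1) (hLR1 : 0 ≤ L_R1) (hLT2 : 0 ≤ L_T2) (hLR2 : 0 ≤ L_R2)
    (ΨT11 ΨT12 ΨT22 ΨR11 ΨR12 ΨR22 : Set ℝ)
    (hmT11 : MeasurableSet ΨT11) (hmT12 : MeasurableSet ΨT12)
    (hmT22 : MeasurableSet ΨT22) (hmR11 : MeasurableSet ΨR11)
    (hmR12 : MeasurableSet ΨR12) (hmR22 : MeasurableSet ΨR22)
    (hsT11 : ΨT11 ⊆ Icc (-1) 1) (hsT12 : ΨT12 ⊆ Icc (-1) 1)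
    (hsT22 : ΨT22 ⊆ Icc (-1) 1) (hsR11 : ΨR11 ⊆ Icc (-1) 1)
    (hsR12 : ΨR12 ⊆ Icc (-1) 1) (hsR22 : ΨR22 ⊆ Icc (-1) 1)
    (d1max d2max dsum dR1 δR1 d1'' d2'' : ℝ)
    (hd1max : d1max = 2 * min (L_T1 * μr ΨT11) (L_R1 * μr ΨR11))
    (hd2max : d2max = 2 * min (L_T2 * μr ΨT22) (L_R2 * μr ΨR22))
    (hdsum : dsum = 2 * L_T2 * μr (ΨT22 \ ΨT12) + 2 * L_R1 * μr (ΨR11 \ ΨR12)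
        + 2 * max (L_T2 * μr ΨT12) (L_R1 * μr ΨR12))
    (hdR1 : dR1 = 2 * L_R1 * μr (ΨR11 \ ΨR12)
        + 2 * max 0 (min (L_R1 * μr (ΨR11 ∩ ΨR12))
            (max (L_R1 * μr ΨR12 - L_T2 * μr ΨT12) 0 + L_T2 * μr (ΨT12 \ ΨT22))))
    (hδR1 : δR1 = 2 * L_R1 * μr (ΨR11 \ ΨR12)
        + 2 * min (L_R1 * μr (ΨR11 ∩ ΨR12))
            (L_R1 * μr ΨR12 - max (L_R2 * μr ΨR22
              - (L_T2 * μr (ΨT22 \ ΨT12) + max (L_T2 * μr ΨT12 - L_R1 * μr ΨR12) 0)) 0))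
    (hd1'' : d1'' = if L_T2 * μr ΨT22 ≤ L_R2 * μr ΨR22
        then min (2 * L_T1 * μr ΨT11) dR1
        else min (2 * L_T1 * μr ΨT11) δR1)
    (hd2'' : d2'' = d2max)
    :
    d1'' = min d1max (dsum - d2max) ∧
      (dsum ≤ d1max + d2max → (d1'', d2'') = (dsum - d2max, d2max)) := by
  have hR11 : L_R1 * μr ΨR11
      = L_R1 * μr (ΨR11 \ ΨR12) + L_R1 * μr (ΨR11 ∩ ΨR12) := by
    rw [μr_split ΨR11 ΨR12 hmR12 hsR11]; ring
  have hT22 : L_T2 * μr ΨT22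
      = L_T2 * μr (ΨT22 \ ΨT12) + L_T2 * μr (ΨT12 ∩ ΨT22) := by
    rw [μr_split ΨT22 ΨT12 hmT12 hsT22, inter_comm ΨT22 ΨT12]; ring
  have hT12 : L_T2 * μr ΨT12
      = L_T2 * μr (ΨT12 \ ΨT22) + L_T2 * μr (ΨT12 ∩ ΨT22) := by
    rw [μr_split ΨT12 ΨT22 hmT22 hsT12]; ring
  have h9 : L_R1 * μr (ΨR11 ∩ ΨR12) ≤ L_R1 * μr ΨR12 :=
    mul_le_mul_of_nonneg_left (μr_inter_le ΨR11 ΨR12 hsR12) hLR1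
  have hmain : d1'' = min d1max (dsum - d2max) := by
    rw [hd1'', hd1max, hd2max, hdsum, hdR1, hδR1, hT22, hT12, hR11,
      show (2:ℝ) * L_T1 * μr ΨT11 = 2 * (L_T1 * μr ΨT11) from by ring,
      show (2:ℝ) * L_R1 * μr (ΨR11 \ ΨR12) = 2 * (L_R1 * μr (ΨR11 \ ΨR12)) from by ring,
      show (2:ℝ) * L_T2 * μr (ΨT22 \ ΨT12) = 2 * (L_T2 * μr (ΨT22 \ ΨT12)) from by ring]
    exact corner_key (L_T1 * μr ΨT11) (L_R1 * μr (ΨR11 \ ΨR12))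
      (L_R1 * μr (ΨR11 ∩ ΨR12)) (L_R1 * μr ΨR12) (L_T2 * μr (ΨT22 \ ΨT12))
      (L_T2 * μr (ΨT12 \ ΨT22)) (L_T2 * μr (ΨT12 ∩ ΨT22)) (L_R2 * μr ΨR22)
      (mul_nonneg hLT1 (μr_nonneg _)) (mul_nonneg hLR1 (μr_nonneg _))
      (mul_nonneg hLR1 (μr_nonneg _)) (mul_nonneg hLR1 (μr_nonneg _))
      (mul_nonneg hLT2 (μr_nonneg _)) (mul_nonneg hLT2 (μr_nonneg _))
      (mul_nonneg hLT2 (μr_nonneg _)) (mul_nonneg hLR2 (μr_nonneg _)) h9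
  refine ⟨hmain, fun h => ?_⟩
  have : d1'' = dsum - d2max := by
    rw [hmain]; exact min_eq_right (by linarith)
  rw [this, hd2'']
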